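/- arXiv:2305.15409 — 3 statements merged into one kernel-verified Lean document; each statement's English description precedes it below -/
import Mathlib

section
/- Let A be a commutative ring, P = A[x_1,...,x_n], I = (f_1,...,f_m) ⊆ P, and suppose σ : P → P is an A-algebra homomorphism with σ(x_i) ≡ x_i mod I for all i and σ(f_j) ∈ I² for all j. Then σ descends to an A-algebra homomorphism s : P/I → P/I² which is a section of the quotient map P/I² → P/I. -/
open MvPolynomial

theorem stmt_2 {A : Type*} [CommRing A] (n m : ℕ)
    (f : Fin m → MvPolynomial (Fin n) A)
    (I : Ideal (MvPolynomial (Fin n) A)) (hI : I = Ideal.span (Set.range f))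
    (σ : MvPolynomial (Fin n) A →ₐ[A] MvPolynomial (Fin n) A)
    (hx : ∀ i, σ (X i) - X i ∈ I)
    (hf : ∀ j, σ (f j) ∈ I ^ 2) :
    ∃ s : (MvPolynomial (Fin n) A ⧸ I) →ₐ[A] (MvPolynomial (Fin n) A ⧸ I ^ 2),
      (∀ p, s (Ideal.Quotient.mk I p) = Ideal.Quotient.mk (I ^ 2) (σ p)) ∧
      ∀ b, Ideal.Quotient.liftₐ (I ^ 2) (Ideal.Quotient.mkₐ A I)
        (fun a ha => Ideal.Quotient.eq_zero_iff_mem.2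
          (Ideal.pow_le_self two_ne_zero ha)) (s b) = b := by
  subst hI
  set I := Ideal.span (Set.range f) with hI
  have hσI : I ≤ Ideal.comap (σ : MvPolynomial (Fin n) A →+* MvPolynomial (Fin n) A) (I ^ 2) := by
    rw [hI, Ideal.span_le]
    rw [← hI]
    rintro _ ⟨j, rfl⟩
    exact hf j
  have key : ∀ p, σ p - p ∈ I := by
    intro p
    induction p using MvPolynomial.induction_on with
    | C a => simp
    | add p q hp hq =>
        simpa [add_sub_add_comm] using I.add_mem hp hq
    | mul_X p i hp =>
        have h1 : σ p * (σ (X i) - X i) + X i * (σ p - p) ∈ I :=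
          I.add_mem (I.mul_mem_left _ (hx i)) (I.mul_mem_left _ hp)
        have h2 : σ (p * X i) - p * X i = σ p * (σ (X i) - X i) + X i * (σ p - p) := by
          rw [map_mul]; ring
        rw [h2]; exact h1
  refine ⟨Ideal.Quotient.liftₐ I ((Ideal.Quotient.mkₐ A (I ^ 2)).comp σ)
      (fun a ha => Ideal.Quotient.eq_zero_iff_mem.2 (hσI ha)), ?_, ?_⟩
  · intro p; rfl
  · intro b
    obtain ⟨p, rfl⟩ := Ideal.Quotient.mk_surjective b
    show Ideal.Quotient.liftₐ (I ^ 2) (Ideal.Quotient.mkₐ A I) _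
        (Ideal.Quotient.mk (I ^ 2) (σ p)) = _
    change Ideal.Quotient.mk I (σ p) = Ideal.Quotient.mk I p
    exact Ideal.Quotient.eq.2 (key p)
end

section
/- Every smooth (i.e., formally smooth and finitely presented) ring homomorphism A → B is obtained by base change from a smooth homomorphism A₀ → B₀ where A₀ and B₀ are finite-type ℤ-algebras (in particular noetherian): there is a ring map A₀ → A with A ⊗_{A₀} B₀ ≅ B as A-algebras. -/
universe u
open TensorProduct

section Aux

variable {A₀ A : Type*} [CommRing A₀] [CommRing A]

/-- A polynomial whose coefficients lie in the range of `φ` lifts along `φ`. -/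
lemma aux_lift_poly {σ : Type*} (φ : A₀ →+* A) (p : MvPolynomial σ A)
    (h : ∀ m, p.coeff m ∈ Set.range φ) :
    ∃ q : MvPolynomial σ A₀, MvPolynomial.map φ q = p := by
  choose c hc using h
  classical
  refine ⟨∑ m ∈ p.support, MvPolynomial.monomial m (c m), ?_⟩
  rw [map_sum]
  simp_rw [MvPolynomial.map_monomial, hc]
  exact MvPolynomial.support_sum_monomial_coeff p

lemma aux_map_aeval {σ : Type*} (φ : A₀ →+* A) (G : σ → MvPolynomial σ A₀)
    (q : MvPolynomial σ A₀) :
    MvPolynomial.map φ (MvPolynomial.aeval G q) =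
      MvPolynomial.aeval (fun i => MvPolynomial.map φ (G i)) (MvPolynomial.map φ q) := by
  induction q using MvPolynomial.induction_on with
  | C a => simp [MvPolynomial.aeval_C, MvPolynomial.algebraMap_eq]
  | add p q hp hq => simp only [map_add, hp, hq]
  | mul_X p i hp => simp only [map_mul, MvPolynomial.aeval_X, MvPolynomial.map_X, hp]

end Aux

set_option maxHeartbeats 1000000 in
set_option synthInstance.maxHeartbeats 400000 in
theorem stmt_5 {A B : Type u} [CommRing A] [CommRing B] [Algebra A B]
    [Algebra.FormallySmooth A B] [Algebra.FinitePresentation A B] :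
    ∃ (A₀ B₀ : Type) (_ : CommRing A₀) (_ : CommRing B₀) (_ : Algebra A₀ B₀)
      (_ : Algebra A₀ A),
      Algebra.FiniteType ℤ A₀ ∧ Algebra.FiniteType ℤ B₀ ∧
      Algebra.FormallySmooth A₀ B₀ ∧ Algebra.FinitePresentation A₀ B₀ ∧
      Nonempty ((A ⊗[A₀] B₀) ≃ₐ[A] B) := by
  classical
  obtain ⟨n, f, hfs, hker⟩ := (inferInstance : Algebra.FinitePresentation A B).out
  obtain ⟨m, F, hF⟩ := Submodule.fg_iff_exists_fin_generating_family.mp hker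
  have hF' : Ideal.span (Set.range F) = RingHom.ker f.toRingHom := hF
  haveI : Algebra.FormallySmooth A (MvPolynomial (Fin n) A) :=
    Algebra.FormallySmooth.of_equiv
      (MvPolynomial.renameEquiv A (Equiv.ulift : ULift.{u} (Fin n) ≃ Fin n))
  obtain ⟨g, hg⟩ := (Algebra.FormallySmooth.iff_split_surjection f hfs).mp inferInstance
  choose G hG using fun i => Ideal.Quotient.mk_surjective (g (f (MvPolynomial.X i)))
  -- the section moves each variable by an element of the kernel
  have hGX : ∀ i, G i - MvPolynomial.X i ∈ RingHom.ker f.toRingHom := by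
    intro i
    have h1 : f.kerSquareLift (Ideal.Quotient.mk _ (G i)) = f (G i) := rfl
    have h2 : f.kerSquareLift (g (f (MvPolynomial.X i))) = f (MvPolynomial.X i) :=
      AlgHom.congr_fun hg (f (MvPolynomial.X i))
    have : f (G i) = f (MvPolynomial.X i) := by rw [← h1, hG i, h2]
    simp [RingHom.mem_ker, map_sub, this]
  -- the relations are sent into the square of the kernel
  have hGrel : ∀ k, MvPolynomial.aeval G (F k) ∈ (RingHom.ker f.toRingHom) ^ 2 := by
    have hcomp : (Ideal.Quotient.mkₐ A ((RingHom.ker f.toRingHom) ^ 2)).comp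
        (MvPolynomial.aeval G : _ →ₐ[A] _) = g.comp f := by
      apply MvPolynomial.algHom_ext
      intro i
      show Ideal.Quotient.mk _ (MvPolynomial.aeval G (MvPolynomial.X i)) = g (f (MvPolynomial.X i))
      rw [MvPolynomial.aeval_X]
      exact hG i
    intro k
    have hFk : F k ∈ RingHom.ker f.toRingHom := hF' ▸ Ideal.subset_span ⟨k, rfl⟩
    have := AlgHom.congr_fun hcomp (F k)
    simp only [AlgHom.comp_apply, Ideal.Quotient.mkₐ_eq_mk] at this
    rw [← Ideal.Quotient.eq_zero_iff_mem, this]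
    rw [RingHom.mem_ker] at hFk
    rw [show f (F k) = 0 from hFk, map_zero]
  -- explicit membership witnesses
  have hGXc : ∀ i, ∃ c : Fin m → MvPolynomial (Fin n) A,
      ∑ k, c k * F k = G i - MvPolynomial.X i := by
    intro i
    rw [← Ideal.mem_span_range_iff_exists_fun, hF']
    exact hGX i
  choose c hc using hGXc
  have sq : (RingHom.ker f.toRingHom) ^ 2 =
      Ideal.span (Set.range fun p : Fin m × Fin m => F p.1 * F p.2) := by
    rw [← hF', pow_two, Ideal.span_mul_span']
    congr 1
    ext x
    constructor
    · rintro ⟨a, ⟨k, rfl⟩, b, ⟨l, rfl⟩, rfl⟩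
      exact ⟨(k, l), rfl⟩
    · rintro ⟨⟨k, l⟩, rfl⟩
      exact ⟨F k, ⟨k, rfl⟩, F l, ⟨l, rfl⟩, rfl⟩
  have hreld : ∀ k, ∃ d : Fin m × Fin m → MvPolynomial (Fin n) A,
      ∑ p, d p * (F p.1 * F p.2) = MvPolynomial.aeval G (F k) := by
    intro k
    rw [← Ideal.mem_span_range_iff_exists_fun, ← sq]
    exact hGrel k
  choose d hd using hreld
  -- collect all coefficients
  let ι : Type := Fin m ⊕ Fin n ⊕ (Fin n × Fin m) ⊕ (Fin m × (Fin m × Fin m))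
  let polys : ι → MvPolynomial (Fin n) A := fun x =>
    match x with
    | .inl k => F k
    | .inr (.inl i) => G i
    | .inr (.inr (.inl (i, k))) => c i k
    | .inr (.inr (.inr (k, p))) => d k p
  let S : Set A := ⋃ x, ↑((polys x).support.image fun mo => (polys x).coeff mo)
  have hSfin : S.Finite := Set.finite_iUnion fun x => Finset.finite_toSet _
  let Sf : Finset A := hSfin.toFinset
  let N : ℕ := Sf.card
  let v : Fin N → A := fun j => ((Sf.equivFin.symm j : A))
  let ρ : MvPolynomial (Fin N) ℤ →ₐ[ℤ] A := MvPolynomial.aeval v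
  let A₀ : Type := MvPolynomial (Fin N) ℤ ⧸ RingHom.ker ρ.toRingHom
  letI : CommRing A₀ := Ideal.Quotient.commRing _
  let φ : A₀ →+* A := RingHom.kerLift ρ.toRingHom
  have hφinj : Function.Injective φ := RingHom.kerLift_injective _
  have hSrange : ∀ a ∈ S, a ∈ Set.range φ := by
    intro a ha
    refine ⟨Ideal.Quotient.mk _ (MvPolynomial.X (Sf.equivFin ⟨a, by simpa [Sf] using ha⟩)), ?_⟩
    show ρ (MvPolynomial.X _) = a
    simp [ρ, v]
  have hcoeff : ∀ (x : ι) mo, (polys x).coeff mo ∈ Set.range φ := by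
    intro x mo
    by_cases h : (polys x).coeff mo = 0
    · exact h ▸ ⟨0, map_zero φ⟩
    · refine hSrange _ (Set.mem_iUnion.mpr ⟨x, ?_⟩)
      simp only [Finset.coe_image, Set.mem_image, Finset.mem_coe, MvPolynomial.mem_support_iff]
      exact ⟨mo, h, rfl⟩
  choose lft hlft using fun x : ι => aux_lift_poly φ (polys x) (hcoeff x)
  let F₀ : Fin m → MvPolynomial (Fin n) A₀ := fun k => lft (.inl k)
  let G₀ : Fin n → MvPolynomial (Fin n) A₀ := fun i => lft (.inr (.inl i))
  let c₀ : Fin n → Fin m → MvPolynomial (Fin n) A₀ := fun i k => lft (.inr (.inr (.inl (i, k))))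
  let d₀ : Fin m → Fin m × Fin m → MvPolynomial (Fin n) A₀ :=
    fun k p => lft (.inr (.inr (.inr (k, p))))
  have hF₀ : ∀ k, MvPolynomial.map φ (F₀ k) = F k := fun k => hlft (.inl k)
  have hG₀ : ∀ i, MvPolynomial.map φ (G₀ i) = G i := fun i => hlft (.inr (.inl i))
  have hc₀ : ∀ i k, MvPolynomial.map φ (c₀ i k) = c i k :=
    fun i k => hlft (.inr (.inr (.inl (i, k))))
  have hd₀ : ∀ k p, MvPolynomial.map φ (d₀ k p) = d k p :=
    fun k p => hlft (.inr (.inr (.inr (k, p))))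
  have hmapinj : Function.Injective (MvPolynomial.map (σ := Fin n) φ) :=
    MvPolynomial.map_injective φ hφinj
  -- the two key identities over A₀
  have idc : ∀ i, G₀ i - MvPolynomial.X i = ∑ k, c₀ i k * F₀ k := by
    intro i
    apply hmapinj
    rw [map_sub, map_sum]
    simp_rw [map_mul, hG₀, hc₀, hF₀, MvPolynomial.map_X]
    exact (hc i).symm
  have idd : ∀ k, MvPolynomial.aeval G₀ (F₀ k) = ∑ p, d₀ k p * (F₀ p.1 * F₀ p.2) := by
    intro k
    apply hmapinj
    rw [aux_map_aeval, map_sum]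
    simp_rw [map_mul, hG₀, hd₀, hF₀]
    exact (hd k).symm
  -- the model
  let I₀ : Ideal (MvPolynomial (Fin n) A₀) := Ideal.span (Set.range F₀)
  let B₀ : Type := MvPolynomial (Fin n) A₀ ⧸ I₀
  letI : CommRing B₀ := Ideal.Quotient.commRing _
  letI : Algebra A₀ B₀ := Ideal.Quotient.algebra _
  letI : Algebra A₀ A := φ.toAlgebra
  have hGXI : ∀ i, G₀ i - MvPolynomial.X i ∈ I₀ := by
    intro i
    rw [idc i]
    exact Submodule.sum_mem _ fun k _ =>
      Ideal.mul_mem_left _ _ (Ideal.subset_span ⟨k, rfl⟩)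
  have hrelI : ∀ k, MvPolynomial.aeval G₀ (F₀ k) ∈ I₀ ^ 2 := by
    intro k
    rw [idd k, pow_two]
    exact Submodule.sum_mem _ fun p _ =>
      Ideal.mul_mem_left _ _
        (Ideal.mul_mem_mul (Ideal.subset_span ⟨p.1, rfl⟩) (Ideal.subset_span ⟨p.2, rfl⟩))
  -- finite type of A₀
  haveI hftA₀ : Algebra.FiniteType ℤ A₀ := by
    exact Algebra.FiniteType.of_surjective (Ideal.Quotient.mkₐ ℤ _)
      (Ideal.Quotient.mkₐ_surjective ℤ _)
  -- finite presentation of B₀ over A₀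
  have hI₀fg : I₀.FG := Submodule.fg_span (Set.finite_range F₀)
  haveI hfpB₀ : Algebra.FinitePresentation A₀ B₀ := Algebra.FinitePresentation.quotient hI₀fg
  haveI hftB₀ : Algebra.FiniteType ℤ B₀ :=
    Algebra.FiniteType.trans hftA₀ inferInstance
  -- formal smoothness of B₀ over A₀
  let f₀ : MvPolynomial (Fin n) A₀ →ₐ[A₀] B₀ := Ideal.Quotient.mkₐ A₀ I₀
  have hker₀ : RingHom.ker f₀.toRingHom = I₀ := Ideal.Quotient.mkₐ_ker A₀ I₀
  have hsurj₀ : Function.Surjective f₀ := Ideal.Quotient.mkₐ_surjective A₀ I₀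
  have hsplit : Algebra.FormallySmooth A₀ B₀ := by
    let K₂ : Ideal (MvPolynomial (Fin n) A₀) := RingHom.ker f₀.toRingHom ^ 2
    have hK₂ : K₂ = I₀ ^ 2 := by rw [show K₂ = RingHom.ker f₀.toRingHom ^ 2 from rfl, hker₀]
    let h₀ : MvPolynomial (Fin n) A₀ →ₐ[A₀] MvPolynomial (Fin n) A₀ ⧸ K₂ :=
      (Ideal.Quotient.mkₐ A₀ K₂).comp (MvPolynomial.aeval G₀)
    have hkill : ∀ p ∈ I₀, h₀ p = 0 := by
      suffices h : I₀ ≤ RingHom.ker h₀.toRingHom from fun p hp => h hp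
      rw [show I₀ = Ideal.span (Set.range F₀) from rfl, Ideal.span_le]
      rintro _ ⟨k, rfl⟩
      show Ideal.Quotient.mk K₂ (MvPolynomial.aeval G₀ (F₀ k)) = 0
      rw [Ideal.Quotient.eq_zero_iff_mem, hK₂]
      exact hrelI k
    let g₀ : B₀ →ₐ[A₀] MvPolynomial (Fin n) A₀ ⧸ K₂ := Ideal.Quotient.liftₐ I₀ h₀ hkill
    refine Algebra.FormallySmooth.of_split f₀ g₀ ?_
    apply AlgHom.ext
    intro b
    obtain ⟨p, rfl⟩ := hsurj₀ b
    have hcomp : f₀.comp (MvPolynomial.aeval G₀ : _ →ₐ[A₀] _) = f₀ := by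
      apply MvPolynomial.algHom_ext
      intro i
      rw [AlgHom.comp_apply, MvPolynomial.aeval_X]
      show f₀ (G₀ i) = f₀ (MvPolynomial.X i)
      have hz : f₀ (G₀ i - MvPolynomial.X i) = 0 := by
        show Ideal.Quotient.mk I₀ (G₀ i - MvPolynomial.X i) = 0
        rw [Ideal.Quotient.eq_zero_iff_mem]
        exact hGXI i
      rw [map_sub] at hz
      exact sub_eq_zero.mp hz
    have h1 : g₀ (f₀ p) = Ideal.Quotient.mk K₂ (MvPolynomial.aeval G₀ p) := rfl
    show f₀.kerSquareLift (g₀ (f₀ p)) = f₀ p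
    rw [h1]
    show f₀ (MvPolynomial.aeval G₀ p) = f₀ p
    exact AlgHom.congr_fun hcomp p
  -- the base change isomorphism
  have hiso : Nonempty ((A ⊗[A₀] B₀) ≃ₐ[A] B) := by
    letI : Algebra A₀ B := ((algebraMap A B).comp φ).toAlgebra
    haveI : IsScalarTower A₀ A B := IsScalarTower.of_algebraMap_eq' rfl
    let u : MvPolynomial (Fin n) A₀ →ₐ[A₀] B := MvPolynomial.aeval (fun i => f (MvPolynomial.X i))
    have hu : ∀ p₀, u p₀ = f (MvPolynomial.map φ p₀) := by
      intro p₀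
      induction p₀ using MvPolynomial.induction_on with
      | C a =>
        rw [MvPolynomial.aeval_C, MvPolynomial.map_C,
          show (MvPolynomial.C (φ a) : MvPolynomial (Fin n) A) = algebraMap A _ (φ a) from rfl,
          f.commutes]
        rfl
      | add p q hp hq => simp only [map_add, hp, hq]
      | mul_X p i hp =>
        rw [map_mul, map_mul, MvPolynomial.map_X, hp,
          show u (MvPolynomial.X i) = f (MvPolynomial.X i) from MvPolynomial.aeval_X _ _,
          ← map_mul]
    have huI : ∀ p ∈ I₀, u p = 0 := by
      suffices h : I₀ ≤ RingHom.ker u.toRingHom from fun p hp => h hp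
      rw [show I₀ = Ideal.span (Set.range F₀) from rfl, Ideal.span_le]
      rintro _ ⟨k, rfl⟩
      show u (F₀ k) = 0
      rw [hu, hF₀]
      have hk : F k ∈ RingHom.ker f.toRingHom := hF' ▸ Ideal.subset_span ⟨k, rfl⟩
      exact hk
    let q₀ : B₀ →ₐ[A₀] B := Ideal.Quotient.liftₐ I₀ u huI
    let Ψ : A ⊗[A₀] B₀ →ₐ[A] B :=
      Algebra.TensorProduct.lift (Algebra.ofId A B) q₀ (fun x y => mul_comm ((Algebra.ofId A B) x) (q₀ y))
    let ψ : MvPolynomial (Fin n) A →ₐ[A] A ⊗[A₀] B₀ :=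
      MvPolynomial.aeval (fun i => (1 : A) ⊗ₜ[A₀] (Ideal.Quotient.mk I₀ (MvPolynomial.X i)))
    have hψφ : ∀ p₀ : MvPolynomial (Fin n) A₀,
        ψ (MvPolynomial.map φ p₀) = 1 ⊗ₜ[A₀] (Ideal.Quotient.mk I₀ p₀) := by
      intro p₀
      induction p₀ using MvPolynomial.induction_on with
      | C a =>
        rw [MvPolynomial.map_C,
          show (MvPolynomial.C (φ a) : MvPolynomial (Fin n) A) = algebraMap A _ (φ a) from rfl,
          AlgHom.commutes]
        rw [show (Ideal.Quotient.mk I₀) (MvPolynomial.C a) = algebraMap A₀ B₀ a from rfl]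
        rw [show (algebraMap A (A ⊗[A₀] B₀)) (φ a) = (φ a) ⊗ₜ[A₀] (1 : B₀) from rfl]
        rw [show φ a = algebraMap A₀ A a from rfl, Algebra.algebraMap_eq_smul_one,
          Algebra.algebraMap_eq_smul_one]
        exact TensorProduct.smul_tmul a 1 1
      | add p q hp hq => simp only [map_add, hp, hq, TensorProduct.tmul_add]
      | mul_X p i hp =>
        rw [map_mul, MvPolynomial.map_X, map_mul, hp, map_mul,
          show ψ (MvPolynomial.X i) = (1:A) ⊗ₜ[A₀] (Ideal.Quotient.mk I₀ (MvPolynomial.X i)) from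
            MvPolynomial.aeval_X _ _,
          Algebra.TensorProduct.tmul_mul_tmul, one_mul]
    have hψI : ∀ p ∈ RingHom.ker f.toRingHom, ψ p = 0 := by
      suffices h : RingHom.ker f.toRingHom ≤ RingHom.ker ψ.toRingHom from fun p hp => h hp
      rw [← hF', Ideal.span_le]
      rintro _ ⟨k, rfl⟩
      show ψ (F k) = 0
      rw [← hF₀ k, hψφ, Ideal.Quotient.eq_zero_iff_mem.mpr (Ideal.subset_span (Set.mem_range_self k)),
        TensorProduct.tmul_zero]
    let e : (MvPolynomial (Fin n) A ⧸ RingHom.ker f.toRingHom) ≃ₐ[A] B :=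
      Ideal.quotientKerAlgEquivOfSurjective hfs
    let ψq : (MvPolynomial (Fin n) A ⧸ RingHom.ker f.toRingHom) →ₐ[A] A ⊗[A₀] B₀ :=
      Ideal.Quotient.liftₐ _ ψ hψI
    let Φ : B →ₐ[A] A ⊗[A₀] B₀ := ψq.comp e.symm.toAlgHom
    have he : ∀ p, e (Ideal.Quotient.mk _ p) = f p := fun p => rfl
    have hΦf : ∀ p, Φ (f p) = ψ p := by
      intro p
      have h1 : e.symm (f p) = Ideal.Quotient.mk _ p := by
        apply e.injective
        rw [AlgEquiv.apply_symm_apply, he]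
      show ψq (e.symm (f p)) = ψ p
      rw [h1]
      rfl
    have h1 : Ψ.comp Φ = AlgHom.id A B := by
      apply AlgHom.ext
      intro b
      obtain ⟨p, rfl⟩ := hfs b
      show Ψ (Φ (f p)) = f p
      rw [hΦf]
      have hcomp : Ψ.comp ψ = f := by
        apply MvPolynomial.algHom_ext
        intro i
        rw [AlgHom.comp_apply,
          show ψ (MvPolynomial.X i) = (1:A) ⊗ₜ[A₀] (Ideal.Quotient.mk I₀ (MvPolynomial.X i)) from
            MvPolynomial.aeval_X _ _]
        rw [show Ψ ((1:A) ⊗ₜ[A₀] Ideal.Quotient.mk I₀ (MvPolynomial.X i)) =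
          (Algebra.ofId A B) 1 * q₀ (Ideal.Quotient.mk I₀ (MvPolynomial.X i)) from rfl]
        rw [map_one, one_mul]
        show u (MvPolynomial.X i) = f (MvPolynomial.X i)
        simp [u]
      exact AlgHom.congr_fun hcomp p
    have h2 : Φ.comp Ψ = AlgHom.id A (A ⊗[A₀] B₀) := by
      apply Algebra.TensorProduct.ext
      · have hA : ∀ (h : A →ₐ[A] A ⊗[A₀] B₀), h = Algebra.ofId A _ := fun h => by
          apply AlgHom.ext
          intro a
          have := h.commutes a
          simpa using this
        exact (hA _).trans (hA _).symm
      · apply AlgHom.ext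
        intro b₀
        obtain ⟨p₀, rfl⟩ := Ideal.Quotient.mk_surjective b₀
        show Φ (Ψ ((1:A) ⊗ₜ[A₀] Ideal.Quotient.mk I₀ p₀)) = (1:A) ⊗ₜ[A₀] Ideal.Quotient.mk I₀ p₀
        rw [show Ψ ((1:A) ⊗ₜ[A₀] Ideal.Quotient.mk I₀ p₀) =
          (Algebra.ofId A B) 1 * q₀ (Ideal.Quotient.mk I₀ p₀) from rfl]
        rw [map_one, one_mul]
        show Φ (u p₀) = _
        rw [hu, hΦf, hψφ]
    exact ⟨AlgEquiv.ofAlgHom Ψ Φ h1 h2⟩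
  exact ⟨A₀, B₀, inferInstance, inferInstance, inferInstance, φ.toAlgebra,
    hftA₀, hftB₀, hsplit, hfpB₀, hiso⟩
end

section
/- Let A be a commutative ring and B = A[x_1,...,x_n]/(f_1,...,f_m). Suppose there exist g_i = Σ_j u_{ij} f_j with u_{ij} ∈ A[x] and h_{jkℓ} ∈ A[x] such that f_j(x_1+g_1,...,x_n+g_n) = Σ_{k,ℓ} h_{jkℓ} f_k f_ℓ for all j. Then B is formally smooth over A. -/
open MvPolynomial

universe uA in
theorem mvPoly_formallySmooth_aux {A : Type uA} [CommRing A] (n : ℕ) :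
    Algebra.FormallySmooth A (MvPolynomial (Fin n) A) :=
  Algebra.FormallySmooth.of_equiv
    (MvPolynomial.renameEquiv A (Equiv.ulift.{uA, 0} (α := Fin n)))

theorem stmt_17 {A : Type*} [CommRing A] (n m : ℕ)
    (f : Fin m → MvPolynomial (Fin n) A)
    (u : Fin n → Fin m → MvPolynomial (Fin n) A)
    (h : Fin m → Fin m → Fin m → MvPolynomial (Fin n) A)
    (key : ∀ j, (aeval (fun i => X i + ∑ j', u i j' * f j') :
        MvPolynomial (Fin n) A →ₐ[A] MvPolynomial (Fin n) A) (f j) =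
      ∑ k, ∑ l, h j k l * f k * f l) :
    Algebra.FormallySmooth A
      (MvPolynomial (Fin n) A ⧸ Ideal.span (Set.range f)) := by
  let P := MvPolynomial (Fin n) A
  let I : Ideal P := Ideal.span (Set.range f)
  let π : P →ₐ[A] P ⧸ I := Ideal.Quotient.mkₐ A I
  have hker : RingHom.ker π.toRingHom = I := Ideal.mk_ker
  let σ : P →ₐ[A] P := aeval (fun i => X i + ∑ j', u i j' * f j')
  have hfI : ∀ j, f j ∈ I := fun j => Ideal.subset_span ⟨j, rfl⟩
  -- σ maps I into I ^ 2
  have hσ : ∀ p ∈ I, σ p ∈ I ^ 2 := by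
    intro p hp
    refine Submodule.span_induction ?_ ?_ ?_ ?_ hp
    · rintro _ ⟨j, rfl⟩
      show (aeval (fun i => X i + ∑ j', u i j' * f j') :
        MvPolynomial (Fin n) A →ₐ[A] MvPolynomial (Fin n) A) (f j) ∈ I ^ 2
      rw [key j]
      refine Ideal.sum_mem _ fun k _ => Ideal.sum_mem _ fun l _ => ?_
      rw [pow_two, mul_assoc]
      exact Ideal.mul_mem_left _ _ (Ideal.mul_mem_mul (hfI k) (hfI l))
    · rw [map_zero]; exact Ideal.zero_mem (I ^ 2)
    · intro a b _ _ ha hb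
      rw [map_add]; exact add_mem ha hb
    · intro a b _ hb
      rw [smul_eq_mul, map_mul]; exact Ideal.mul_mem_left _ (σ a) hb
  have hI2 : I ^ 2 = (RingHom.ker π.toRingHom) ^ 2 := by rw [hker]
  let q : P →ₐ[A] P ⧸ (RingHom.ker π.toRingHom) ^ 2 :=
    (Ideal.Quotient.mkₐ A ((RingHom.ker π.toRingHom) ^ 2)).comp σ
  have hq : I ≤ RingHom.ker q.toRingHom := by
    intro p hp
    have h1 : σ p ∈ (RingHom.ker π.toRingHom) ^ 2 := hI2 ▸ hσ p hp
    show Ideal.Quotient.mkₐ A ((RingHom.ker π.toRingHom) ^ 2) (σ p) = 0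
    rwa [Ideal.Quotient.mkₐ_eq_mk, Ideal.Quotient.eq_zero_iff_mem]
  let g : (P ⧸ I) →ₐ[A] P ⧸ (RingHom.ker π.toRingHom) ^ 2 :=
    Ideal.Quotient.liftₐ I q hq
  haveI : Algebra.FormallySmooth A P :=
    mvPoly_formallySmooth_aux n
  refine Algebra.FormallySmooth.of_split π g ?_
  apply AlgHom.coe_ringHom_injective
  apply Ideal.Quotient.ringHom_ext
  apply MvPolynomial.ringHom_ext
  · intro a
    show π.kerSquareLift (g (π (C a))) = π (C a)
    have : g (π (C a)) = Ideal.Quotient.mk _ (σ (C a)) := rfl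
    rw [this]
    show π (σ (C a)) = π (C a)
    rw [aeval_C]
    rfl
  · intro i
    show π.kerSquareLift (g (π (X i))) = π (X i)
    have hg : g (π (X i)) = Ideal.Quotient.mk _ (σ (X i)) := rfl
    rw [hg]
    show π (σ (X i)) = π (X i)
    have hσX : σ (X i) = X i + ∑ j', u i j' * f j' := aeval_X _ i
    have h2 : π (∑ j', u i j' * f j') = 0 := by
      show Ideal.Quotient.mk I _ = 0
      rw [Ideal.Quotient.eq_zero_iff_mem]
      exact Ideal.sum_mem _ fun j' _ => Ideal.mul_mem_left _ _ (hfI j')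
    rw [hσX, map_add, h2, add_zero]
end
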